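/- Let u : [0, ∞) → ℝ be continuous and let c > 0. If limsup_{s → ∞} ( u(s) + c ∫₀ˢ u(t)² dt ) = 0, then u is identically zero on [0, ∞). -/

import Mathlib

open Filter MeasureTheory intervalIntegral

private lemma guim_aux (u : ℝ → ℝ) (hu : Continuous u) (c : ℝ) (hc : 0 < c)
    (h : ∀ ε : ℝ, 0 < ε → ∀ᶠ s in atTop, u s + c * ∫ t in (0:ℝ)..s, u t ^ 2 < ε)
    (t₀ : ℝ) (ht₀ : 0 ≤ t₀) (hne : u t₀ ≠ 0) : False := by
  set I : ℝ → ℝ := fun s => ∫ t in (0:ℝ)..s, u t ^ 2 with hIdef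
  have hcont : Continuous fun t => u t ^ 2 := hu.pow 2
  have hint : ∀ a b : ℝ, IntervalIntegrable (fun t => u t ^ 2) volume a b := fun a b =>
    hcont.intervalIntegrable a b
  have hderivI : ∀ s, HasDerivAt I (u s ^ 2) s := fun s =>
    integral_hasDerivAt_right (hint 0 s)
      (hcont.stronglyMeasurableAtFilter _ _) hcont.continuousAt
  have hadd : ∀ a b : ℝ, I b = I a + ∫ t in a..b, u t ^ 2 := by
    intro a b
    show (∫ t in (0:ℝ)..b, u t ^ 2) = (∫ t in (0:ℝ)..a, u t ^ 2) + ∫ t in a..b, u t ^ 2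
    rw [integral_add_adjacent_intervals (hint 0 a) (hint a b)]
  have hmono : Monotone I := by
    intro a b hab
    have h0 : (0:ℝ) ≤ ∫ t in a..b, u t ^ 2 :=
      intervalIntegral.integral_nonneg hab fun x _ => sq_nonneg _
    have := hadd a b
    linarith
  -- there is a point where I is positive
  obtain ⟨b₀, hb₀pos⟩ : ∃ b₀, 0 < I b₀ := by
    have h0 : 0 < u t₀ ^ 2 := by positivity
    have := continuousAt_const.eventually_lt (hcont.continuousAt (x := t₀)) h0
    rw [Metric.eventually_nhds_iff] at this
    obtain ⟨δ, hδ, hδ'⟩ := this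
    refine ⟨t₀ + δ/2, ?_⟩
    have hip : 0 < ∫ t in t₀..(t₀ + δ/2), u t ^ 2 := by
      refine intervalIntegral_pos_of_pos_on (hint _ _) (fun x hx => ?_) (by linarith)
      refine hδ' ?_
      rw [Real.dist_eq, abs_lt]
      obtain ⟨h1, h2⟩ := hx
      constructor <;> linarith
    have hI0 : I 0 = 0 := by simp [hIdef]
    have hIt₀ : (0:ℝ) ≤ I t₀ := hI0 ▸ hmono ht₀
    have := hadd t₀ (t₀ + δ/2)
    linarith
  -- step 1: u is eventually ≤ -(c * I b₀ / 2)
  have ha₀ : (0:ℝ) < c * I b₀ / 2 := by positivity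
  obtain ⟨S₁, hS₁⟩ := (h (c * I b₀ / 2) ha₀).exists_forall_of_atTop
  have hub : ∀ s ≥ max S₁ b₀, u s ≤ -(c * I b₀ / 2) := by
    intro s hs
    have h1 : u s + c * I s < c * I b₀ / 2 := hS₁ s (le_trans (le_max_left _ _) hs)
    have h2 : I b₀ ≤ I s := hmono (le_trans (le_max_right _ _) hs)
    nlinarith
  -- I grows at least linearly, hence tends to infinity
  have hlin : ∀ s ≥ max S₁ b₀, I (max S₁ b₀) + (c * I b₀ / 2) ^ 2 * (s - max S₁ b₀) ≤ I s := by
    intro s hs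
    have hm : ∫ t in (max S₁ b₀)..s, (c * I b₀ / 2) ^ 2 ≤ ∫ t in (max S₁ b₀)..s, u t ^ 2 := by
      refine intervalIntegral.integral_mono_on hs intervalIntegrable_const (hint _ _) ?_
      intro x hx
      have h1 := hub x hx.1
      nlinarith
    rw [intervalIntegral.integral_const, smul_eq_mul] at hm
    have := hadd (max S₁ b₀) s
    nlinarith
  have hItop : Tendsto I atTop atTop := by
    have h1 : Tendsto (fun s : ℝ => s - max S₁ b₀) atTop atTop :=
      tendsto_atTop_add_const_right _ _ tendsto_id
    have h2 : Tendsto (fun s : ℝ => (c * I b₀ / 2) ^ 2 * (s - max S₁ b₀)) atTop atTop :=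
      h1.const_mul_atTop (by positivity)
    have h3 : Tendsto (fun s : ℝ =>
        I (max S₁ b₀) + (c * I b₀ / 2) ^ 2 * (s - max S₁ b₀)) atTop atTop :=
      tendsto_atTop_add_const_left _ _ h2
    refine tendsto_atTop_mono' atTop ?_ h3
    filter_upwards [eventually_ge_atTop (max S₁ b₀)] with s hs using hlin s hs
  -- step 2: blow-up comparison
  obtain ⟨S₃, hS₃⟩ := (h 1 one_pos).exists_forall_of_atTop
  obtain ⟨S₄, hS₄⟩ := (hItop.eventually_ge_atTop (2 / c)).exists_forall_of_atTop
  obtain ⟨S, hSS₃, hSS₄⟩ : ∃ S : ℝ, S₃ ≤ S ∧ S₄ ≤ S :=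
    ⟨max S₃ S₄, le_max_left _ _, le_max_right _ _⟩
  set K : ℝ → ℝ := fun s => c * I s - 1 with hKdef
  have hKval : ∀ s, K s = c * I s - 1 := fun s => rfl
  have hKS : 1 ≤ K S := by
    have h1 : 2 / c ≤ I S := hS₄ S hSS₄
    have h2 : 2 / c * c ≤ I S * c := by nlinarith
    rw [div_mul_cancel₀ _ (ne_of_gt hc)] at h2
    rw [hKval]
    nlinarith
  have hKpos : ∀ s ≥ S, 0 < K s := by
    intro s hs
    have h1 : I S ≤ I s := hmono hs
    have h2 : K S ≤ K s := by rw [hKval, hKval]; nlinarith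
    linarith
  have hultK : ∀ s ≥ S, u s < -K s := by
    intro s hs
    have h1 : u s + c * I s < 1 := hS₃ s (le_trans hSS₃ hs)
    rw [hKval]
    linarith
  have hKderiv : ∀ s, HasDerivAt K (c * u s ^ 2) s := fun s =>
    ((hderivI s).const_mul c).sub_const 1
  -- the function g
  set g : ℝ → ℝ := fun s => -(K s)⁻¹ - c * s with hgdef
  have hgval : ∀ s, g s = -(K s)⁻¹ - c * s := fun s => rfl
  have hgderiv : ∀ s ≥ S, HasDerivAt g (c * u s ^ 2 / K s ^ 2 - c) s := by
    intro s hs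
    have h1 : HasDerivAt (fun y => (K y)⁻¹) (-(c * u s ^ 2) / K s ^ 2) s :=
      (hKderiv s).inv (ne_of_gt (hKpos s hs))
    have h2 : HasDerivAt (fun y : ℝ => c * y) c s := by
      simpa using (hasDerivAt_id s).const_mul c
    have h3 : HasDerivAt g (-(-(c * u s ^ 2) / K s ^ 2) - c) s := h1.neg.sub h2
    convert h3 using 1
    ring
  have hg'nonneg : ∀ s ≥ S, 0 ≤ c * u s ^ 2 / K s ^ 2 - c := by
    intro s hs
    have hK := hKpos s hs
    have hu2 : K s ^ 2 ≤ u s ^ 2 := by nlinarith [hultK s hs]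
    rw [sub_nonneg, le_div_iff₀ (by positivity)]
    nlinarith
  have hgmono : MonotoneOn g (Set.Ici S) := by
    refine monotoneOn_of_hasDerivWithinAt_nonneg (convex_Ici S) ?_
      (f' := fun s => c * u s ^ 2 / K s ^ 2 - c) ?_ ?_
    · intro x hx
      exact ((hgderiv x hx).continuousAt).continuousWithinAt
    · intro x hx
      rw [interior_Ici] at hx
      exact ((hgderiv x (le_of_lt hx)).hasDerivWithinAt)
    · intro x hx
      rw [interior_Ici] at hx
      exact hg'nonneg x (le_of_lt hx)
  -- contradiction
  have h2c : (0:ℝ) < 2 / c := by positivity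
  have hs₁ : S ≤ S + 2 / c := by linarith
  have hg1 := hgmono Set.self_mem_Ici (Set.mem_Ici.mpr hs₁) hs₁
  rw [hgval, hgval] at hg1
  have hKs₁ := hKpos (S + 2 / c) hs₁
  have hKs₁inv : 0 < (K (S + 2 / c))⁻¹ := by positivity
  have hKSinv : (K S)⁻¹ ≤ 1 := by
    rw [inv_le_one_iff₀]; right; exact hKS
  have hcs : c * (S + 2 / c) = c * S + 2 := by field_simp
  linarith

/-- Equality case of Guimaraes' lemma: if the limsup (in the extended reals) of
`s ↦ u s + c ∫₀ˢ u t ^ 2 dt` is `0`, then `u ≡ 0` on `[0, ∞)`. -/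
theorem guimaraes_limsup_eq_zero (u : ℝ → ℝ) (hu : ContinuousOn u (Set.Ici 0))
    (c : ℝ) (hc : 0 < c)
    (h : Filter.limsup (fun s : ℝ => ((u s + c * ∫ t in (0:ℝ)..s, u t ^ 2 : ℝ) : EReal))
        Filter.atTop = 0) :
    ∀ t ∈ Set.Ici (0:ℝ), u t = 0 := by
  have h' : ∀ ε : ℝ, 0 < ε → ∀ᶠ s in atTop, u s + c * ∫ t in (0:ℝ)..s, u t ^ 2 < ε := by
    intro ε hε
    have hlt : Filter.limsup (fun s : ℝ => ((u s + c * ∫ t in (0:ℝ)..s, u t ^ 2 : ℝ) : EReal))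
        Filter.atTop < (ε : EReal) := by
      rw [h]
      exact_mod_cast hε
    filter_upwards [Filter.eventually_lt_of_limsup_lt hlt] with s hs
    exact_mod_cast hs
  set v : ℝ → ℝ := fun t => u (max t 0) with hvdef
  have hv : Continuous v :=
    hu.comp_continuous (continuous_id.max continuous_const) fun t => le_max_right t 0
  have hveq : ∀ t ≥ (0:ℝ), v t = u t := by
    intro t ht
    simp [hvdef, max_eq_left ht]
  have hvint : ∀ s ≥ (0:ℝ), (∫ t in (0:ℝ)..s, v t ^ 2) = ∫ t in (0:ℝ)..s, u t ^ 2 := by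
    intro s hs
    refine intervalIntegral.integral_congr fun x hx => ?_
    rw [Set.uIcc_of_le hs] at hx
    rw [hveq x hx.1]
  have h'' : ∀ ε : ℝ, 0 < ε → ∀ᶠ s in atTop, v s + c * ∫ t in (0:ℝ)..s, v t ^ 2 < ε := by
    intro ε hε
    filter_upwards [h' ε hε, eventually_ge_atTop (0:ℝ)] with s hs hs0
    rw [hveq s hs0, hvint s hs0]
    exact hs
  intro t ht
  by_contra hne
  refine guim_aux v hv c hc h'' t ht ?_
  rw [hveq t ht]
  exact hne
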